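/- Uniform estimate on 1 − g_α: the quantity K = 2π · sup_{0<ρ<1} ρ B₁(ρ) is finite, and there exists a universal constant 𝒞 > 0 (one may take 𝒞 = max{K,1}) such that for every α > 0 and every z ∈ ℝ², one has 0 ≤ 1 − g_α(z) ≤ 𝒞 √α |z|; in particular 0 < g_α(z) ≤ 1 for all z. -/

import Mathlib

open MeasureTheory Real

/-- The radial Bessel kernel with parameter `1`. -/
noncomputable def besselRadialOne (ρ : ℝ) : ℝ :=
  (1 / (4 * π)) * ∫ t in Set.Ioi (0 : ℝ), t⁻¹ * Real.exp (-ρ ^ 2 / (4 * t) - t)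

/-- `g_α(z) = ∫₀^∞ exp(−s − α|z|²/(4s)) ds`. -/
noncomputable def gAlpha (α : ℝ) (z : EuclideanSpace ℝ (Fin 2)) : ℝ :=
  ∫ s in Set.Ioi (0 : ℝ), Real.exp (-s - α * ‖z‖ ^ 2 / (4 * s))

lemma aux_sqrt_le_exp (x : ℝ) (hx : 0 ≤ x) : Real.sqrt x ≤ Real.exp x := by
  have h1 : Real.sqrt x ≤ 1 + x := by
    nlinarith [Real.sq_sqrt hx, Real.sqrt_nonneg x, sq_nonneg (Real.sqrt x - 1)]
  linarith [Real.add_one_le_exp x]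

lemma aux_gamma_half : (∫ t in Set.Ioi (0:ℝ), Real.exp (-t) * t ^ ((1/2:ℝ) - 1)) = Real.sqrt π := by
  rw [← Real.Gamma_eq_integral (by norm_num : (0:ℝ) < 1/2), Real.Gamma_one_half_eq]

lemma aux_gamma_half_integrable :
    IntegrableOn (fun t => Real.exp (-t) * t ^ ((1/2:ℝ) - 1)) (Set.Ioi (0:ℝ)) :=
  Real.GammaIntegral_convergent (by norm_num)

lemma aux_one_sub_exp_neg_le_sqrt (x : ℝ) (hx : 0 ≤ x) : 1 - Real.exp (-x) ≤ Real.sqrt x := by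
  rcases le_or_gt 1 x with h | h
  · have : 1 ≤ Real.sqrt x := Real.one_le_sqrt.2 h
    have := Real.exp_nonneg (-x)
    linarith
  · have hx2 : x ≤ Real.sqrt x := by
      nlinarith [Real.sq_sqrt hx, Real.sqrt_nonneg x]
    have := Real.add_one_le_exp (-x)
    linarith

lemma aux_exp_neg_le (x : ℝ) (hx : 0 < x) : Real.exp (-x) ≤ (Real.sqrt x)⁻¹ := by
  rw [Real.exp_neg]
  exact inv_anti₀ (Real.sqrt_pos.2 hx) (aux_sqrt_le_exp x hx.le)

lemma aux_rpow_half (t : ℝ) (ht : 0 < t) : t ^ ((1/2:ℝ) - 1) = (Real.sqrt t)⁻¹ := by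
  rw [show (1/2:ℝ) - 1 = -(1/2) by norm_num, Real.rpow_neg ht.le, Real.sqrt_eq_rpow]

lemma aux_bound (ρ : ℝ) (hρ : 0 < ρ) : ρ * besselRadialOne ρ ≤ Real.sqrt π / (2 * π) := by
  have hI : (∫ t in Set.Ioi (0:ℝ), t⁻¹ * Real.exp (-ρ ^ 2 / (4 * t) - t))
      ≤ (2 / ρ) * Real.sqrt π := by
    have hint : Integrable (fun t => (2/ρ) * (Real.exp (-t) * t ^ ((1/2:ℝ) - 1)))
        ((volume : Measure ℝ).restrict (Set.Ioi 0)) :=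
      aux_gamma_half_integrable.const_mul _
    calc (∫ t in Set.Ioi (0:ℝ), t⁻¹ * Real.exp (-ρ ^ 2 / (4 * t) - t))
        ≤ ∫ t in Set.Ioi (0:ℝ), (2/ρ) * (Real.exp (-t) * t ^ ((1/2:ℝ) - 1)) := by
          refine integral_mono_of_nonneg ?_ hint ?_
          · filter_upwards [ae_restrict_mem measurableSet_Ioi] with t ht
            exact mul_nonneg (inv_nonneg.2 (le_of_lt ht)) (Real.exp_pos _).le
          · filter_upwards [ae_restrict_mem measurableSet_Ioi] with t ht
            have ht0 : (0:ℝ) < t := ht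
            have hx : (0:ℝ) < ρ ^ 2 / (4 * t) := by positivity
            have h1 : Real.exp (-ρ ^ 2 / (4 * t) - t)
                = Real.exp (-(ρ ^ 2 / (4 * t))) * Real.exp (-t) := by
              rw [← Real.exp_add]; ring_nf
            have h2 : Real.exp (-(ρ ^ 2 / (4 * t))) ≤ 2 * Real.sqrt t / ρ := by
              have := aux_exp_neg_le _ hx
              have hs : Real.sqrt (ρ ^ 2 / (4 * t)) = ρ / (2 * Real.sqrt t) := by
                rw [Real.sqrt_div (by positivity), Real.sqrt_sq hρ.le,
                  show (4:ℝ) * t = 2^2 * t by norm_num, Real.sqrt_mul (by positivity),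
                  Real.sqrt_sq (by norm_num)]
              rw [hs] at this
              rwa [inv_div] at this
            calc t⁻¹ * Real.exp (-ρ ^ 2 / (4 * t) - t)
                ≤ t⁻¹ * ((2 * Real.sqrt t / ρ) * Real.exp (-t)) := by
                  rw [h1]
                  exact mul_le_mul_of_nonneg_left
                    (mul_le_mul_of_nonneg_right h2 (Real.exp_pos _).le)
                    (inv_nonneg.2 ht0.le)
              _ = (2/ρ) * (Real.exp (-t) * t ^ ((1/2:ℝ) - 1)) := by
                  rw [aux_rpow_half t ht0]
                  have hst : Real.sqrt t ≠ 0 := (Real.sqrt_pos.2 ht0).ne'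
                  have h3 : t⁻¹ = (Real.sqrt t)⁻¹ * (Real.sqrt t)⁻¹ := by
                    rw [← mul_inv]
                    rw [Real.mul_self_sqrt ht0.le]
                  rw [h3]; field_simp
      _ = (2/ρ) * Real.sqrt π := by rw [integral_const_mul, aux_gamma_half]
  have hπ : (0:ℝ) < π := Real.pi_pos
  have : besselRadialOne ρ ≤ (1 / (4 * π)) * ((2/ρ) * Real.sqrt π) := by
    unfold besselRadialOne
    exact mul_le_mul_of_nonneg_left hI (by positivity)
  calc ρ * besselRadialOne ρ ≤ ρ * ((1 / (4 * π)) * ((2/ρ) * Real.sqrt π)) :=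
        mul_le_mul_of_nonneg_left this hρ.le
    _ = Real.sqrt π / (2 * π) := by field_simp; ring

/-- Uniform estimate on `1 − g_α`: the quantity `K = 2π sup_{0<ρ<1} ρ B₁(ρ)` is
finite, and with `𝒞 = max (K, 1) > 0` one has `0 ≤ 1 − g_α(z) ≤ 𝒞 √α |z|`
for every `α > 0` and `z ∈ ℝ²`; in particular `0 < g_α(z) ≤ 1`. -/
theorem uniform_estimate_one_sub_g :
    BddAbove ((fun ρ => ρ * besselRadialOne ρ) '' Set.Ioo (0 : ℝ) 1) ∧
    ∃ C : ℝ, 0 < C ∧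
      C = max (2 * π * sSup ((fun ρ => ρ * besselRadialOne ρ) '' Set.Ioo (0 : ℝ) 1)) 1 ∧
      ∀ α : ℝ, 0 < α → ∀ z : EuclideanSpace ℝ (Fin 2),
        (0 ≤ 1 - gAlpha α z ∧ 1 - gAlpha α z ≤ C * Real.sqrt α * ‖z‖) ∧
        (0 < gAlpha α z ∧ gAlpha α z ≤ 1) := by
  constructor
  · exact ⟨Real.sqrt π / (2 * π), fun x ⟨ρ, hρ, hx⟩ => hx ▸ aux_bound ρ hρ.1⟩
  refine ⟨_, lt_of_lt_of_le one_pos (le_max_right _ _), rfl, fun α hα z => ?_⟩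
  set C := max (2 * π * sSup ((fun ρ => ρ * besselRadialOne ρ) '' Set.Ioo (0 : ℝ) 1)) 1 with hC
  have hC1 : (1:ℝ) ≤ C := le_max_right _ _
  set β := α * ‖z‖ ^ 2 with hβdef
  have hβ : 0 ≤ β := by positivity
  -- integrability of exp(-s)
  have hexp_int : IntegrableOn (fun s => Real.exp (-s)) (Set.Ioi (0:ℝ)) := by
    simpa using exp_neg_integrableOn_Ioi 0 one_pos
  -- integrability of g integrand
  have hmeas : Measurable (fun s : ℝ => Real.exp (-s - β / (4 * s))) := by
    fun_prop
  have hg_int : IntegrableOn (fun s => Real.exp (-s - β / (4 * s))) (Set.Ioi (0:ℝ)) := by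
    refine Integrable.mono hexp_int hmeas.aestronglyMeasurable.restrict ?_
    filter_upwards [ae_restrict_mem measurableSet_Ioi] with s hs
    have hs0 : (0:ℝ) < s := hs
    rw [Real.norm_eq_abs, Real.norm_eq_abs, abs_of_pos (Real.exp_pos _),
      abs_of_pos (Real.exp_pos _)]
    apply Real.exp_le_exp.2
    have : 0 ≤ β / (4 * s) := by positivity
    linarith
  have hsub : 1 - gAlpha α z
      = ∫ s in Set.Ioi (0:ℝ), (Real.exp (-s) - Real.exp (-s - β / (4 * s))) := by
    rw [integral_sub hexp_int hg_int, integral_exp_neg_Ioi_zero]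
    rfl
  have hnonneg : 0 ≤ 1 - gAlpha α z := by
    rw [hsub]
    refine setIntegral_nonneg measurableSet_Ioi fun s hs => ?_
    have hs0 : (0:ℝ) < s := hs
    have : 0 ≤ β / (4 * s) := by positivity
    have := Real.exp_le_exp.2 (show -s - β / (4*s) ≤ -s by linarith)
    linarith
  have hupper : 1 - gAlpha α z ≤ C * Real.sqrt α * ‖z‖ := by
    have key : 1 - gAlpha α z ≤ (Real.sqrt β / 2) * Real.sqrt π := by
      rw [hsub]
      have hint : Integrable (fun s => (Real.sqrt β / 2) * (Real.exp (-s) * s ^ ((1/2:ℝ) - 1)))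
          ((volume : Measure ℝ).restrict (Set.Ioi 0)) :=
        aux_gamma_half_integrable.const_mul _
      calc (∫ s in Set.Ioi (0:ℝ), (Real.exp (-s) - Real.exp (-s - β / (4 * s))))
          ≤ ∫ s in Set.Ioi (0:ℝ), (Real.sqrt β / 2) * (Real.exp (-s) * s ^ ((1/2:ℝ) - 1)) := by
            refine integral_mono_of_nonneg ?_ hint ?_
            · filter_upwards [ae_restrict_mem measurableSet_Ioi] with s hs
              have hs0 : (0:ℝ) < s := hs
              have : 0 ≤ β / (4 * s) := by positivity
              exact sub_nonneg.2
                (Real.exp_le_exp.2 (show -s - β / (4*s) ≤ -s by linarith))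
            · filter_upwards [ae_restrict_mem measurableSet_Ioi] with s hs
              have hs0 : (0:ℝ) < s := hs
              have hx : (0:ℝ) ≤ β / (4 * s) := by positivity
              have h1 : Real.exp (-s) - Real.exp (-s - β / (4 * s))
                  = Real.exp (-s) * (1 - Real.exp (-(β / (4 * s)))) := by
                rw [mul_sub, mul_one, ← Real.exp_add]; ring_nf
              have h2 : 1 - Real.exp (-(β / (4 * s))) ≤ Real.sqrt (β / (4 * s)) :=
                aux_one_sub_exp_neg_le_sqrt _ hx
              have h3 : Real.sqrt (β / (4 * s)) = (Real.sqrt β / 2) * (Real.sqrt s)⁻¹ := by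
                rw [Real.sqrt_div hβ, show (4:ℝ) * s = 2^2 * s by norm_num,
                  Real.sqrt_mul (by positivity), Real.sqrt_sq (by norm_num)]
                field_simp
                rw [Real.sqrt_mul (by norm_num : (0:ℝ) ≤ 2^2), Real.sqrt_sq (by norm_num : (0:ℝ) ≤ 2)]; ring
              calc Real.exp (-s) - Real.exp (-s - β / (4 * s))
                  ≤ Real.exp (-s) * Real.sqrt (β / (4 * s)) := by
                    rw [h1]
                    exact mul_le_mul_of_nonneg_left h2 (Real.exp_pos _).le
                _ = (Real.sqrt β / 2) * (Real.exp (-s) * s ^ ((1/2:ℝ) - 1)) := by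
                    rw [h3, aux_rpow_half s hs0]; ring
        _ = (Real.sqrt β / 2) * Real.sqrt π := by rw [integral_const_mul, aux_gamma_half]
    have hβeq : Real.sqrt β = Real.sqrt α * ‖z‖ := by
      rw [hβdef, Real.sqrt_mul hα.le, Real.sqrt_sq (norm_nonneg z)]
    have hπ4 : Real.sqrt π ≤ 2 := by
      rw [show (2:ℝ) = Real.sqrt 4 by rw [show (4:ℝ) = 2^2 by norm_num, Real.sqrt_sq]; norm_num]
      exact Real.sqrt_le_sqrt (by linarith [Real.pi_le_four])
    calc 1 - gAlpha α z ≤ (Real.sqrt β / 2) * Real.sqrt π := key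
      _ ≤ Real.sqrt β := by nlinarith [Real.sqrt_nonneg β]
      _ = 1 * Real.sqrt α * ‖z‖ := by rw [hβeq]; ring
      _ ≤ C * Real.sqrt α * ‖z‖ := by
          have : 0 ≤ Real.sqrt α * ‖z‖ := by positivity
          nlinarith
  have hgpos : 0 < gAlpha α z := by
    unfold gAlpha
    rw [show (fun s : ℝ => Real.exp (-s - α * ‖z‖ ^ 2 / (4 * s)))
        = fun s : ℝ => Real.exp (-s - β / (4 * s)) from rfl]
    rw [setIntegral_pos_iff_support_of_nonneg_ae
      (Filter.Eventually.of_forall fun s => (Real.exp_pos _).le) hg_int]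
    have : Function.support (fun s : ℝ => Real.exp (-s - β / (4 * s))) = Set.univ := by
      ext s; simp [Function.support, (Real.exp_pos _).ne']
    rw [this, Set.univ_inter]
    simp [Real.volume_Ioi]
  exact ⟨⟨hnonneg, hupper⟩, hgpos, by linarith⟩
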